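/- Under the same assumptions, if nonzero u, v and λ simultaneously satisfy (c₂(v)A₁ − a₂(v)C₁)u = λ(b₂(v)C₁ − c₂(v)B₁)u and (a₁(u)C₂ − c₁(u)A₂)v = λ(c₁(u)B₂ − b₁(u)C₂)v, then setting μ := −(a₂(v) + λb₂(v))/c₂(v), one has (A₁ + λB₁ + μC₁)u = 0 and (A₂ + λB₂ + μC₂)v = 0; moreover μ = −(a₁(u) + λb₁(u))/c₁(u). -/

import Mathlib

open Matrix Kronecker

/-- Fixed-point lemma: a simultaneous solution of the alternating eigenvalue problems with
common eigenvalue `λ` solves the two-parameter problem with `μ = −(a₂ + λb₂)/c₂`,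
and moreover `μ = −(a₁ + λb₁)/c₁`. -/
theorem stmt_6 {n m : ℕ}
    (A₁ B₁ C₁ : Matrix (Fin n) (Fin n) ℝ) (A₂ B₂ C₂ : Matrix (Fin m) (Fin m) ℝ)
    (hA₁ : A₁.IsSymm) (hB₁ : B₁.IsSymm) (hC₁ : C₁.IsSymm)
    (hA₂ : A₂.IsSymm) (hB₂ : B₂.IsSymm) (hC₂ : C₂.IsSymm)
    (hC₂pos : C₂.PosDef) (hC₁neg : (-C₁).PosDef)
    (hdef : (C₁ ⊗ₖ B₂ - B₁ ⊗ₖ C₂).PosDef)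
    (u : Fin n → ℝ) (v : Fin m → ℝ) (hu : u ≠ 0) (hv : v ≠ 0) (lam : ℝ)
    (a₁ : ℝ) (ha₁ : a₁ = u ⬝ᵥ A₁.mulVec u) (b₁ : ℝ) (hb₁ : b₁ = u ⬝ᵥ B₁.mulVec u)
    (c₁ : ℝ) (hc₁ : c₁ = u ⬝ᵥ C₁.mulVec u) (a₂ : ℝ) (ha₂ : a₂ = v ⬝ᵥ A₂.mulVec v)
    (b₂ : ℝ) (hb₂ : b₂ = v ⬝ᵥ B₂.mulVec v) (c₂ : ℝ) (hc₂ : c₂ = v ⬝ᵥ C₂.mulVec v)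
    (h1 : (c₂ • A₁ - a₂ • C₁).mulVec u = lam • (b₂ • C₁ - c₂ • B₁).mulVec u)
    (h2 : (a₁ • C₂ - c₁ • A₂).mulVec v = lam • (c₁ • B₂ - b₁ • C₂).mulVec v)
    (mu : ℝ) (hmu : mu = -(a₂ + lam * b₂) / c₂) :
    (A₁ + lam • B₁ + mu • C₁).mulVec u = 0 ∧
      (A₂ + lam • B₂ + mu • C₂).mulVec v = 0 ∧
      mu = -(a₁ + lam * b₁) / c₁ := by
  have hc₂pos : 0 < c₂ := by
    have := (Matrix.posDef_iff_dotProduct_mulVec.mp hC₂pos).2 hv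
    simpa [hc₂] using this
  have hc₁neg : c₁ < 0 := by
    have := (Matrix.posDef_iff_dotProduct_mulVec.mp hC₁neg).2 hu
    simp only [RCLike.re_to_real, neg_mulVec, dotProduct_neg, star_trivial] at this
    rw [hc₁]; linarith
  have hc₂ne : c₂ ≠ 0 := ne_of_gt hc₂pos
  have hc₁ne : c₁ ≠ 0 := ne_of_lt hc₁neg
  have hmuc : mu * c₂ = -(a₂ + lam * b₂) := by
    rw [hmu]; field_simp
  set X := A₁.mulVec u with hX
  set Y := B₁.mulVec u with hY
  set Z := C₁.mulVec u with hZ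
  have h1' : c₂ • X - a₂ • Z = lam • (b₂ • Z - c₂ • Y) := by
    simpa [Matrix.sub_mulVec, Matrix.smul_mulVec] using h1
  have key1 : (A₁ + lam • B₁ + mu • C₁).mulVec u = 0 := by
    have hkey : c₂ • (X + lam • Y + mu • Z) = 0 := by
      have expand : c₂ • (X + lam • Y + mu • Z)
          = (c₂ • X - a₂ • Z) - lam • (b₂ • Z - c₂ • Y)
            + (a₂ + lam * b₂ + mu * c₂) • Z := by module
      rw [expand, h1', hmuc]
      module
    have : X + lam • Y + mu • Z = 0 := by
      rcases smul_eq_zero.mp hkey with h | h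
      · exact absurd h hc₂ne
      · exact h
    simpa [Matrix.add_mulVec, Matrix.smul_mulVec] using this
  have hdot : a₁ + lam * b₁ + mu * c₁ = 0 := by
    have := congrArg (fun w => u ⬝ᵥ w) key1
    simp only [Matrix.add_mulVec, Matrix.smul_mulVec, dotProduct_add,
      dotProduct_smul, dotProduct_zero, smul_eq_mul] at this
    rw [ha₁, hb₁, hc₁]; linarith
  have hmu1 : mu = -(a₁ + lam * b₁) / c₁ := by
    field_simp
    linarith
  have hmuc1 : mu * c₁ = -(a₁ + lam * b₁) := by linarith
  set P := A₂.mulVec v with hP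
  set Q := B₂.mulVec v with hQ
  set R := C₂.mulVec v with hR
  have h2' : a₁ • R - c₁ • P = lam • (c₁ • Q - b₁ • R) := by
    simpa [Matrix.sub_mulVec, Matrix.smul_mulVec] using h2
  have key2 : (A₂ + lam • B₂ + mu • C₂).mulVec v = 0 := by
    have hkey : c₁ • (P + lam • Q + mu • R) = 0 := by
      have expand : c₁ • (P + lam • Q + mu • R)
          = -((a₁ • R - c₁ • P) - lam • (c₁ • Q - b₁ • R))
            + (a₁ + lam * b₁ + mu * c₁) • R := by module
      rw [expand, h2', hmuc1]
      module
    have : P + lam • Q + mu • R = 0 := by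
      rcases smul_eq_zero.mp hkey with h | h
      · exact absurd h hc₁ne
      · exact h
    simpa [Matrix.add_mulVec, Matrix.smul_mulVec] using this
  exact ⟨key1, key2, hmu1⟩
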